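/- Let A be a complex C*-algebra and let Δ : A → A be a weak-2-local *-derivation on A. Then for all self-adjoint elements a, b ∈ A (a* = a, b* = b): Δ(a + ib) = Δ(a) + iΔ(b) and Δ(a + ib) = Δ(a − ib)*. -/

import Mathlib

variable {A : Type*} [NonUnitalCStarAlgebra A]

/-- A (not necessarily linear) map `Δ` on a complex C*-algebra `A` is a weak-2-local
*-derivation if for all `a b ∈ A` and every continuous linear functional `φ` on `A` there is a
*-derivation `D` on `A` (a `ℂ`-linear map satisfying the Leibniz rule and commuting with the
involution) such that `φ (Δ a) = φ (D a)` and `φ (Δ b) = φ (D b)`. -/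
def IsWeak2LocalStarDerivation (Δ : A → A) : Prop :=
  ∀ (a b : A) (φ : A →L[ℂ] ℂ),
    ∃ D : A →ₗ[ℂ] A,
      (∀ x y, D (x * y) = D x * y + x * D y) ∧
      (∀ x, D (star x) = star (D x)) ∧
      φ (Δ a) = φ (D a) ∧ φ (Δ b) = φ (D b)

/-- The hermitian-conjugate functional `x ↦ conj (φ (x*))`. -/
noncomputable def hermConjCLM (φ : A →L[ℂ] ℂ) : A →L[ℂ] ℂ :=
  ⟨{ toFun := fun x => starRingEnd ℂ (φ (star x)),
     map_add' := fun x y => by simp,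
     map_smul' := fun c x => by simp [star_smul] },
   continuous_star.comp (φ.continuous.comp continuous_star)⟩

@[simp] lemma hermConjCLM_apply (φ : A →L[ℂ] ℂ) (x : A) :
    hermConjCLM φ x = starRingEnd ℂ (φ (star x)) := rfl

/-- Key computation for hermitian functionals. -/
lemma herm_pair (Δ : A → A) (hΔ : IsWeak2LocalStarDerivation Δ)
    (a b : A) (ha : star a = a) (hb : star b = b)
    (χ : A →L[ℂ] ℂ) (hχ : ∀ x, χ (star x) = starRingEnd ℂ (χ x)) :
    χ (Δ (a + Complex.I • b)) = χ (Δ a) + Complex.I * χ (Δ b) ∧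
    starRingEnd ℂ (χ (Δ (a + Complex.I • b))) = χ (Δ (a - Complex.I • b)) := by
  have real_of : ∀ (D : A →ₗ[ℂ] A), (∀ x, D (star x) = star (D x)) →
      ∀ c : A, star c = c → starRingEnd ℂ (χ (D c)) = χ (D c) := by
    intro D hD c hc
    calc starRingEnd ℂ (χ (D c)) = χ (star (D c)) := (hχ _).symm
      _ = χ (D (star c)) := by rw [hD]
      _ = χ (D c) := by rw [hc]
  -- pair (a + I b, a)
  obtain ⟨D₁, -, hD₁, u₁, v₁⟩ := hΔ (a + Complex.I • b) a χ
  have e₁ : χ (Δ (a + Complex.I • b)) = χ (D₁ a) + Complex.I * χ (D₁ b) := by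
    rw [u₁, map_add, map_smul, map_add, map_smul, smul_eq_mul]
  have c₁ : starRingEnd ℂ (χ (Δ (a + Complex.I • b)))
      = χ (D₁ a) - Complex.I * χ (D₁ b) := by
    rw [e₁, map_add, map_mul, real_of D₁ hD₁ a ha, real_of D₁ hD₁ b hb, Complex.conj_I]
    ring
  have hA : 2 * χ (Δ a) = χ (Δ (a + Complex.I • b))
      + starRingEnd ℂ (χ (Δ (a + Complex.I • b))) := by
    rw [v₁, c₁, e₁]; ring
  -- pair (a + I b, b)
  obtain ⟨D₂, -, hD₂, u₂, v₂⟩ := hΔ (a + Complex.I • b) b χ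
  have e₂ : χ (Δ (a + Complex.I • b)) = χ (D₂ a) + Complex.I * χ (D₂ b) := by
    rw [u₂, map_add, map_smul, map_add, map_smul, smul_eq_mul]
  have c₂ : starRingEnd ℂ (χ (Δ (a + Complex.I • b)))
      = χ (D₂ a) - Complex.I * χ (D₂ b) := by
    rw [e₂, map_add, map_mul, real_of D₂ hD₂ a ha, real_of D₂ hD₂ b hb, Complex.conj_I]
    ring
  have hB : 2 * Complex.I * χ (Δ b) = χ (Δ (a + Complex.I • b))
      - starRingEnd ℂ (χ (Δ (a + Complex.I • b))) := by
    rw [v₂, c₂, e₂]; ring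
  -- pair (a - I b, a)
  obtain ⟨D₃, -, hD₃, u₃, v₃⟩ := hΔ (a - Complex.I • b) a χ
  have e₃ : χ (Δ (a - Complex.I • b)) = χ (D₃ a) - Complex.I * χ (D₃ b) := by
    rw [u₃, map_sub, map_smul, map_sub, map_smul, smul_eq_mul]
  have c₃ : starRingEnd ℂ (χ (Δ (a - Complex.I • b)))
      = χ (D₃ a) + Complex.I * χ (D₃ b) := by
    rw [e₃, map_sub, map_mul, real_of D₃ hD₃ a ha, real_of D₃ hD₃ b hb, Complex.conj_I]
    ring
  have hC : 2 * χ (Δ a) = χ (Δ (a - Complex.I • b))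
      + starRingEnd ℂ (χ (Δ (a - Complex.I • b))) := by
    rw [v₃, c₃, e₃]; ring
  -- pair (a - I b, b)
  obtain ⟨D₄, -, hD₄, u₄, v₄⟩ := hΔ (a - Complex.I • b) b χ
  have e₄ : χ (Δ (a - Complex.I • b)) = χ (D₄ a) - Complex.I * χ (D₄ b) := by
    rw [u₄, map_sub, map_smul, map_sub, map_smul, smul_eq_mul]
  have c₄ : starRingEnd ℂ (χ (Δ (a - Complex.I • b)))
      = χ (D₄ a) + Complex.I * χ (D₄ b) := by
    rw [e₄, map_sub, map_mul, real_of D₄ hD₄ a ha, real_of D₄ hD₄ b hb, Complex.conj_I]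
    ring
  have hD : 2 * Complex.I * χ (Δ b) = starRingEnd ℂ (χ (Δ (a - Complex.I • b)))
      - χ (Δ (a - Complex.I • b)) := by
    rw [v₄, c₄, e₄]; ring
  constructor
  · linear_combination (-1/2 : ℂ) * hA + (-1/2 : ℂ) * hB
  · linear_combination (-1/2 : ℂ) * hA + (1/2 : ℂ) * hB + (1/2 : ℂ) * hC + (-1/2 : ℂ) * hD

/-- A weak-2-local *-derivation satisfies `Δ(a + ib) = Δ(a) + iΔ(b) = Δ(a - ib)*` for all
self-adjoint `a, b`. -/
theorem weak2local_star_derivation_add_smul_I (Δ : A → A)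
    (hΔ : IsWeak2LocalStarDerivation Δ) (a b : A) (ha : star a = a) (hb : star b = b) :
    Δ (a + Complex.I • b) = Δ a + Complex.I • Δ b ∧
    Δ (a + Complex.I • b) = star (Δ (a - Complex.I • b)) := by
  have main : ∀ (x y : A), (∀ φ : A →L[ℂ] ℂ, φ x = φ y) → x = y := by
    intro x y h
    by_contra hne
    obtain ⟨f, hf⟩ := SeparatingDual.exists_separating_of_ne (R := ℂ) hne
    exact hf (h f)
  have key : ∀ φ : A →L[ℂ] ℂ,
      φ (Δ (a + Complex.I • b)) = φ (Δ a) + Complex.I * φ (Δ b) ∧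
      φ (Δ (a + Complex.I • b)) = φ (star (Δ (a - Complex.I • b))) := by
    intro φ
    set ψ := hermConjCLM φ with hψ
    set χ₁ : A →L[ℂ] ℂ := (2⁻¹ : ℂ) • (φ + ψ) with hχ₁def
    set χ₂ : A →L[ℂ] ℂ := (2 * Complex.I)⁻¹ • (φ - ψ) with hχ₂def
    have hχ₁ : ∀ x, χ₁ (star x) = starRingEnd ℂ (χ₁ x) := by
      intro x
      simp only [hχ₁def, ContinuousLinearMap.smul_apply, ContinuousLinearMap.add_apply,
        hψ, hermConjCLM_apply, star_star, smul_eq_mul, map_mul, map_add,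
        Complex.conj_conj]
      rw [map_inv₀]
      simp [Complex.conj_ofNat]
      ring
    have hχ₂ : ∀ x, χ₂ (star x) = starRingEnd ℂ (χ₂ x) := by
      intro x
      simp only [hχ₂def, ContinuousLinearMap.smul_apply, ContinuousLinearMap.sub_apply,
        hψ, hermConjCLM_apply, star_star, smul_eq_mul, map_mul, map_sub,
        Complex.conj_conj]
      rw [map_inv₀, map_mul, Complex.conj_I]
      simp [Complex.conj_ofNat]
      field_simp
      linear_combination (0 : ℂ) * Complex.I_sq
    have hsum : ∀ x, φ x = χ₁ x + Complex.I * χ₂ x := by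
      intro x
      simp only [hχ₁def, hχ₂def, ContinuousLinearMap.smul_apply,
        ContinuousLinearMap.add_apply, ContinuousLinearMap.sub_apply, smul_eq_mul]
      field_simp
      ring
    obtain ⟨g₁A, g₁B⟩ := herm_pair Δ hΔ a b ha hb χ₁ hχ₁
    obtain ⟨g₂A, g₂B⟩ := herm_pair Δ hΔ a b ha hb χ₂ hχ₂
    constructor
    · linear_combination (hsum (Δ (a + Complex.I • b))) - (hsum (Δ a))
        - Complex.I * (hsum (Δ b)) + g₁A + Complex.I * g₂A
    · have e : φ (star (Δ (a - Complex.I • b)))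
          = χ₁ (star (Δ (a - Complex.I • b)))
            + Complex.I * χ₂ (star (Δ (a - Complex.I • b))) := hsum _
      rw [hχ₁ (Δ (a - Complex.I • b)), hχ₂ (Δ (a - Complex.I • b)), ← g₁B, ← g₂B] at e
      simp only [Complex.conj_conj] at e
      rw [e, hsum (Δ (a + Complex.I • b))]
  constructor
  · refine main _ _ fun φ => ?_
    rw [(key φ).1, map_add, map_smul, smul_eq_mul]
  · exact main _ _ fun φ => (key φ).2
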